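/- Let f(x) = wᵀx + b be a linear classifier on ℝᵈ with w ≠ 0, let ε ∈ (0, 1/3), and let v ~ N(0, Σ) with Σ positive definite. If |α| < (1/√(2·ln(1/ε))) · (‖w‖₂/‖√Σ w‖₂) · dist₂(x, H), where dist₂(x, H) = |f(x)|/‖w‖₂ is the Euclidean distance from x to the hyperplane H = {z : f(z) = 0}, then P(sign(f(x + αv)) ≠ sign(f(x))) < ε (assuming f(x) ≠ 0). -/

import Mathlib

open MeasureTheory ProbabilityTheory Matrix Finset Real

section OldSqrt

open scoped ComplexOrder

/-- The positive semidefinite square root of a positive semidefinite matrix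
(the definition removed from Mathlib, restored with its old meaning). -/
noncomputable def Matrix.PosSemidef.sqrt {n 𝕜 : Type*} [Fintype n] [DecidableEq n] [RCLike 𝕜]
    {A : Matrix n n 𝕜} (hA : A.PosSemidef) : Matrix n n 𝕜 :=
  (hA.1.eigenvectorUnitary : Matrix n n 𝕜) *
    diagonal ((fun r : ℝ => (r : 𝕜)) ∘ (√·) ∘ hA.1.eigenvalues) *
    (star hA.1.eigenvectorUnitary : Matrix n n 𝕜)

end OldSqrt

lemma lintegral_exp_gaussian (c : ℝ) :
    ∫⁻ x, ENNReal.ofReal (Real.exp (c * x)) ∂(gaussianReal 0 1)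
      = ENNReal.ofReal (Real.exp (c ^ 2 / 2)) := by
  rw [gaussianReal_of_var_ne_zero 0 one_ne_zero]
  rw [lintegral_withDensity_eq_lintegral_mul _ (measurable_gaussianPDF 0 1)
    (by fun_prop)]
  have hpt : ∀ x : ℝ, (gaussianPDF 0 1 x * ENNReal.ofReal (Real.exp (c * x)))
      = ENNReal.ofReal (Real.exp (c ^ 2 / 2)) * gaussianPDF c 1 x := by
    intro x
    rw [gaussianPDF, gaussianPDF, ← ENNReal.ofReal_mul (gaussianPDFReal_nonneg 0 1 x),
      ← ENNReal.ofReal_mul (Real.exp_nonneg _)]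
    congr 1
    simp only [gaussianPDFReal, NNReal.coe_one, mul_one, sub_zero]
    rw [mul_assoc, ← Real.exp_add, mul_left_comm, ← Real.exp_add]
    congr 1
    ring_nf
  simp only [Pi.mul_apply, hpt]
  rw [lintegral_const_mul _ (measurable_gaussianPDF c 1),
    lintegral_gaussianPDF_eq_one c one_ne_zero, mul_one]

lemma lintegral_pi_prod {n : ℕ} (μ : Fin n → Measure ℝ) [∀ i, SigmaFinite (μ i)]
    (f : Fin n → ℝ → ENNReal) (hf : ∀ i, Measurable (f i)) :
    ∫⁻ x, ∏ i, f i (x i) ∂Measure.pi μ = ∏ i, ∫⁻ x, f i x ∂μ i := by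
  induction n with
  | zero => simp [lintegral_const, Measure.pi_empty_univ]
  | succ n ih =>
    have hmp := (MeasureTheory.measurePreserving_piFinSuccAbove μ 0).symm
    rw [← hmp.lintegral_comp (by fun_prop)]
    simp_rw [MeasurableEquiv.piFinSuccAbove_symm_apply, Fin.insertNthEquiv,
      Fin.prod_univ_succ, Fin.insertNth_zero, Equiv.coe_fn_mk, Fin.zero_succAbove,
      Fin.cons_zero, Fin.cons_succ, cast_eq]
    rw [lintegral_prod_mul (f := fun a => f 0 a) (g := fun y : Fin n → ℝ => ∏ j : Fin n, f j.succ (y j)) (hf 0).aemeasurable (Finset.measurable_prod univ (fun j _ => (hf j.succ).comp (measurable_pi_apply j))).aemeasurable]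
    rw [ih _ _ (fun i => hf i.succ)]

lemma lintegral_exp_sum (d : ℕ) (a : Fin d → ℝ) :
    ∫⁻ g : Fin d → ℝ, ENNReal.ofReal (Real.exp (∑ i, a i * g i))
        ∂(Measure.pi fun _ => gaussianReal 0 1)
      = ENNReal.ofReal (Real.exp ((∑ i, a i ^ 2) / 2)) := by
  have h : ∀ g : Fin d → ℝ, ENNReal.ofReal (Real.exp (∑ i, a i * g i))
      = ∏ i, ENNReal.ofReal (Real.exp (a i * g i)) := by
    intro g
    rw [Real.exp_sum, ← ENNReal.ofReal_prod_of_nonneg (fun i _ => Real.exp_nonneg _)]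
  simp_rw [h]
  rw [lintegral_pi_prod _ (fun i x => ENNReal.ofReal (Real.exp (a i * x))) (fun i => by fun_prop)]
  simp_rw [lintegral_exp_gaussian]
  rw [← ENNReal.ofReal_prod_of_nonneg (fun i _ => Real.exp_nonneg _), ← Real.exp_sum,
    ← Finset.sum_div]

lemma chernoff_gaussian (d : ℕ) (a : Fin d → ℝ) (ha : 0 < ∑ i, a i ^ 2) (s : ℝ) (hs : 0 < s) :
    (Measure.pi fun _ : Fin d => gaussianReal 0 1) {g | s ≤ ∑ i, a i * g i}
      ≤ ENNReal.ofReal (Real.exp (-(s ^ 2) / (2 * ∑ i, a i ^ 2))) := by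
  set A := ∑ i, a i ^ 2 with hA
  set t := s / A with htdef
  have ht : 0 < t := div_pos hs ha
  set μ := (Measure.pi fun _ : Fin d => gaussianReal 0 1) with hμ
  set f : (Fin d → ℝ) → ENNReal := fun g => ENNReal.ofReal (Real.exp (∑ i, (t * a i) * g i))
    with hfdef
  have hfm : AEMeasurable f μ := by
    apply Measurable.aemeasurable
    fun_prop
  have key := mul_meas_ge_le_lintegral₀ hfm (ENNReal.ofReal (Real.exp (t * s)))
  have hsub : {g : Fin d → ℝ | s ≤ ∑ i, a i * g i}
      ⊆ {g | ENNReal.ofReal (Real.exp (t * s)) ≤ f g} := by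
    intro g hg
    simp only [Set.mem_setOf_eq] at hg ⊢
    apply ENNReal.ofReal_le_ofReal
    apply Real.exp_le_exp.2
    simp_rw [mul_assoc, ← Finset.mul_sum]
    exact mul_le_mul_of_nonneg_left hg ht.le
  have hε0 : ENNReal.ofReal (Real.exp (t * s)) ≠ 0 := by
    simp [Real.exp_pos]
  have hεt : ENNReal.ofReal (Real.exp (t * s)) ≠ ⊤ := ENNReal.ofReal_ne_top
  calc μ {g | s ≤ ∑ i, a i * g i}
      ≤ μ {g | ENNReal.ofReal (Real.exp (t * s)) ≤ f g} := measure_mono hsub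
    _ = (ENNReal.ofReal (Real.exp (t * s)))⁻¹
        * (ENNReal.ofReal (Real.exp (t * s)) * μ {g | ENNReal.ofReal (Real.exp (t * s)) ≤ f g}) := by
        rw [← mul_assoc, ENNReal.inv_mul_cancel hε0 hεt, one_mul]
    _ ≤ (ENNReal.ofReal (Real.exp (t * s)))⁻¹ * ∫⁻ g, f g ∂μ := mul_le_mul_right key _
    _ = ENNReal.ofReal (Real.exp (-(s ^ 2) / (2 * A))) := by
        rw [hfdef]
        simp only
        rw [lintegral_exp_sum, ← ENNReal.ofReal_inv_of_pos (Real.exp_pos _), ← Real.exp_neg,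
          ← ENNReal.ofReal_mul (Real.exp_nonneg _), ← Real.exp_add]
        congr 1
        have h2 : ∑ i, (t * a i) ^ 2 = t ^ 2 * A := by
          rw [hA, Finset.mul_sum]
          exact Finset.sum_congr rfl fun i _ => by ring
        rw [h2, htdef]
        field_simp
        ring

theorem gaussian_noise_robustness_lower (d : ℕ) (w : Fin d → ℝ) (hw : w ≠ 0) (b : ℝ)
    (x : Fin d → ℝ) (hfx : w ⬝ᵥ x + b ≠ 0) (ε : ℝ) (hε : ε ∈ Set.Ioo (0 : ℝ) (1 / 3))
    (S : Matrix (Fin d) (Fin d) ℝ) (hS : S.PosDef) (α : ℝ)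
    (hα : |α| < (1 / Real.sqrt (2 * Real.log (1 / ε)))
        * (Real.sqrt (∑ i, w i ^ 2)
            / Real.sqrt (∑ i, (hS.posSemidef.sqrt.mulVec w) i ^ 2))
        * (|w ⬝ᵥ x + b| / Real.sqrt (∑ i, w i ^ 2))) :
    (Measure.pi fun _ : Fin d => gaussianReal 0 1)
        {g | (w ⬝ᵥ x + b) * (w ⬝ᵥ (x + α • hS.posSemidef.sqrt.mulVec g) + b) ≤ 0}
      < ENNReal.ofReal ε := by
  set M := hS.posSemidef.sqrt with hM
  set c := w ⬝ᵥ x + b with hc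
  set u := M.mulVec w with hu
  -- symmetry of M
  have hMsym : Mᵀ = M := by
    have : M.IsHermitian := by
      rw [IsHermitian, hM, Matrix.PosSemidef.sqrt, conjTranspose_mul, conjTranspose_mul,
        star_eq_conjTranspose, conjTranspose_conjTranspose, diagonal_conjTranspose, star_trivial,
        Matrix.mul_assoc]
    rwa [Matrix.IsHermitian, conjTranspose_eq_transpose_of_trivial] at this
  have hvm : w ᵥ* M = u := by
    rw [hu, ← Matrix.vecMul_transpose, hMsym]
  have hvecMul : ∀ g : Fin d → ℝ, w ⬝ᵥ M.mulVec g = u ⬝ᵥ g := by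
    intro g
    rw [dotProduct_mulVec, hvm]
  -- event rewriting
  have hev : ∀ g : Fin d → ℝ,
      (w ⬝ᵥ (x + α • M.mulVec g) + b) = c + α * (u ⬝ᵥ g) := by
    intro g
    rw [dotProduct_add, dotProduct_smul, smul_eq_mul, hvecMul, hc]
    ring
  -- positivity of ∑ u i ^ 2
  have hU2 : 0 < ∑ i, u i ^ 2 := by
    have h1 : (0 : ℝ) < star w ⬝ᵥ S *ᵥ w := hS.dotProduct_mulVec_pos hw
    have hMM : M * M = S := by
      conv_rhs => rw [hS.posSemidef.1.spectral_theorem]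
      have hU := Unitary.coe_star_mul_self hS.posSemidef.1.eigenvectorUnitary
      simp only [hM, Matrix.PosSemidef.sqrt, Unitary.conjStarAlgAut_apply]
      set U : Matrix (Fin d) (Fin d) ℝ := (hS.posSemidef.1.eigenvectorUnitary : Matrix (Fin d) (Fin d) ℝ)
      simp only [Matrix.mul_assoc]
      rw [← Matrix.mul_assoc (star U) U, hU, Matrix.one_mul, ← Matrix.mul_assoc (diagonal _),
        diagonal_mul_diagonal]
      congr 3
      funext i
      simp [Real.mul_self_sqrt (hS.posSemidef.eigenvalues_nonneg i)]
    have h2 : S *ᵥ w = M *ᵥ u := by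
      rw [hu, Matrix.mulVec_mulVec, hMM]
    have h3 : star w ⬝ᵥ S *ᵥ w = ∑ i, u i ^ 2 := by
      rw [star_trivial, h2, dotProduct_mulVec, hvm]
      simp [dotProduct, pow_two]
    rwa [h3] at h1
  have hW2 : 0 < ∑ i, w i ^ 2 := by
    obtain ⟨i, hi⟩ := Function.ne_iff.1 hw
    exact Finset.sum_pos' (fun j _ => sq_nonneg _) ⟨i, Finset.mem_univ i, pow_two_pos_of_ne_zero hi⟩
  set L := Real.log (1 / ε) with hL
  have hLpos : 0 < L := Real.log_pos (by
    rw [lt_div_iff₀ hε.1]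
    linarith [hε.2])
  have hUpos : 0 < Real.sqrt (∑ i, u i ^ 2) := Real.sqrt_pos.2 hU2
  have hWpos : 0 < Real.sqrt (∑ i, w i ^ 2) := Real.sqrt_pos.2 hW2
  have hsqLpos : 0 < Real.sqrt (2 * L) := Real.sqrt_pos.2 (by linarith)
  have hcpos : 0 < |c| := abs_pos.2 hfx
  -- simplified hypothesis
  have hα' : |α| * (Real.sqrt (2 * L) * Real.sqrt (∑ i, u i ^ 2)) < |c| := by
    have hrhs : (1 / Real.sqrt (2 * L))
        * (Real.sqrt (∑ i, w i ^ 2) / Real.sqrt (∑ i, u i ^ 2))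
        * (|c| / Real.sqrt (∑ i, w i ^ 2))
        = |c| / (Real.sqrt (2 * L) * Real.sqrt (∑ i, u i ^ 2)) := by
      field_simp
    rw [hrhs] at hα
    exact (lt_div_iff₀ (by positivity)).1 hα
  -- squared version
  have hsq : α ^ 2 * (2 * L) * (∑ i, u i ^ 2) < c ^ 2 := by
    have h := mul_self_lt_mul_self (by positivity) hα'
    have e1 : Real.sqrt (2 * L) * Real.sqrt (2 * L) = 2 * L :=
      Real.mul_self_sqrt (by linarith)
    have e2 : Real.sqrt (∑ i, u i ^ 2) * Real.sqrt (∑ i, u i ^ 2) = ∑ i, u i ^ 2 :=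
      Real.mul_self_sqrt hU2.le
    calc α ^ 2 * (2 * L) * (∑ i, u i ^ 2)
        = (|α| * |α|) * ((Real.sqrt (2 * L) * Real.sqrt (2 * L))
            * (Real.sqrt (∑ i, u i ^ 2) * Real.sqrt (∑ i, u i ^ 2))) := by
          rw [e1, e2, abs_mul_abs_self]
          ring
      _ = (|α| * (Real.sqrt (2 * L) * Real.sqrt (∑ i, u i ^ 2)))
          * (|α| * (Real.sqrt (2 * L) * Real.sqrt (∑ i, u i ^ 2))) := by ring
      _ < |c| * |c| := h
      _ = c ^ 2 := by rw [abs_mul_abs_self]; ring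
  by_cases hα0 : α = 0
  · have : {g : Fin d → ℝ | c * (w ⬝ᵥ (x + α • M.mulVec g) + b) ≤ 0} = ∅ := by
      ext g
      simp only [Set.mem_setOf_eq, Set.mem_empty_iff_false, iff_false, not_le, hev g, hα0]
      simp only [zero_smul, add_zero]
      exact mul_self_pos.2 hfx
    rw [this, measure_empty]
    exact ENNReal.ofReal_pos.2 hε.1
  · set a : Fin d → ℝ := fun i => -(c * α) * u i with ha
    have hsum : ∀ g : Fin d → ℝ, ∑ i, a i * g i = -(c * α) * (u ⬝ᵥ g) := by
      intro g
      rw [dotProduct, Finset.mul_sum]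
      exact Finset.sum_congr rfl fun i _ => by rw [ha]; ring
    have hA2 : ∑ i, a i ^ 2 = (c * α) ^ 2 * ∑ i, u i ^ 2 := by
      rw [Finset.mul_sum]
      exact Finset.sum_congr rfl fun i _ => by rw [ha]; ring
    have hApos : 0 < ∑ i, a i ^ 2 := by
      rw [hA2]
      apply mul_pos (by positivity) hU2
    have hc2 : 0 < c ^ 2 := by positivity
    have hsub : {g : Fin d → ℝ | c * (w ⬝ᵥ (x + α • M.mulVec g) + b) ≤ 0}
        ⊆ {g | c ^ 2 ≤ ∑ i, a i * g i} := by
      intro g hg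
      simp only [Set.mem_setOf_eq, hev g] at hg ⊢
      rw [hsum g]
      nlinarith [hg]
    calc (Measure.pi fun _ : Fin d => gaussianReal 0 1)
          {g | c * (w ⬝ᵥ (x + α • M.mulVec g) + b) ≤ 0}
        ≤ (Measure.pi fun _ : Fin d => gaussianReal 0 1) {g | c ^ 2 ≤ ∑ i, a i * g i} :=
          measure_mono hsub
      _ ≤ ENNReal.ofReal (Real.exp (-((c ^ 2) ^ 2) / (2 * ∑ i, a i ^ 2))) :=
          chernoff_gaussian d a hApos _ hc2
      _ < ENNReal.ofReal ε := by
          rw [ENNReal.ofReal_lt_ofReal_iff hε.1]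
          have hεexp : ε = Real.exp (-L) := by
            rw [hL, Real.log_div one_ne_zero (ne_of_gt hε.1), Real.log_one, zero_sub, neg_neg,
              Real.exp_log hε.1]
          rw [hεexp]
          apply Real.exp_lt_exp.2
          have hca : c * α ≠ 0 := mul_ne_zero hfx hα0
          have hcap : 0 < (c * α) ^ 2 := pow_two_pos_of_ne_zero hca
          have hD : (0:ℝ) < 2 * ((c * α) ^ 2 * ∑ i, u i ^ 2) := by positivity
          rw [hA2, div_lt_iff₀ hD]
          nlinarith [mul_lt_mul_of_pos_right hsq hc2]
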